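/- Over KP^P: for each natural number k ≥ 1, the schema of Σ_k^P-Separation implies the schema of B_k^P-Foundation; i.e., if Σ_k^P-Separation holds, then for every B_k^P formula φ(x), if there exists a with φ(a), then there exists a' with φ(a') such that no element of a' satisfies φ. -/

import Mathlib

namespace SetTh

/-- First-order formulas of the language of set theory, with `n` free variables
(de Bruijn indices). -/
inductive Fml : ℕ → Type where
  | mem {n : ℕ} (i j : Fin n) : Fml n
  | eq {n : ℕ} (i j : Fin n) : Fml n
  | not {n : ℕ} (φ : Fml n) : Fml n
  | and {n : ℕ} (φ ψ : Fml n) : Fml n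
  | all {n : ℕ} (φ : Fml (n + 1)) : Fml n

namespace Fml

def or {n : ℕ} (φ ψ : Fml n) : Fml n := Fml.not (Fml.and (Fml.not φ) (Fml.not ψ))

def imp {n : ℕ} (φ ψ : Fml n) : Fml n := Fml.or (Fml.not φ) ψ

def ex {n : ℕ} (φ : Fml (n + 1)) : Fml n := Fml.not (Fml.all (Fml.not φ))

/-- The formula `xᵢ ⊆ xⱼ`. -/
def subeq {n : ℕ} (i j : Fin n) : Fml n :=
  Fml.all (Fml.imp (Fml.mem (0 : Fin (n + 1)) i.succ) (Fml.mem (0 : Fin (n + 1)) j.succ))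

end Fml

/-- Renaming of variables. -/
def rename : (m n : ℕ) → (Fin m → Fin n) → Fml m → Fml n
  | _, _, f, Fml.mem i j => Fml.mem (f i) (f j)
  | _, _, f, Fml.eq i j => Fml.eq (f i) (f j)
  | m, n, f, Fml.not φ => Fml.not (rename m n f φ)
  | m, n, f, Fml.and φ ψ => Fml.and (rename m n f φ) (rename m n f ψ)
  | m, n, f, Fml.all φ =>
      Fml.all (rename (m + 1) (n + 1)
        (fun k => Fin.cases (0 : Fin (n + 1)) (fun i => (f i).succ) k) φ)

/-- Tarskian satisfaction for a structure `(M, E)`. -/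
def Realize {M : Type*} (E : M → M → Prop) : (n : ℕ) → Fml n → (Fin n → M) → Prop
  | _, Fml.mem i j, v => E (v i) (v j)
  | _, Fml.eq i j, v => v i = v j
  | n, Fml.not φ, v => ¬ Realize E n φ v
  | n, Fml.and φ ψ, v => Realize E n φ v ∧ Realize E n ψ v
  | n, Fml.all φ, v => ∀ x : M, Realize E (n + 1) φ (Fin.cons x v)

/-- Δ₀ formulas: all quantifiers are bounded by ∈. -/
inductive IsDelta0 : (n : ℕ) → Fml n → Prop where
  | mem {n : ℕ} (i j : Fin n) : IsDelta0 n (Fml.mem i j)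
  | eq {n : ℕ} (i j : Fin n) : IsDelta0 n (Fml.eq i j)
  | not {n : ℕ} {φ : Fml n} : IsDelta0 n φ → IsDelta0 n (Fml.not φ)
  | and {n : ℕ} {φ ψ : Fml n} : IsDelta0 n φ → IsDelta0 n ψ → IsDelta0 n (Fml.and φ ψ)
  | allMem {n : ℕ} (j : Fin n) {φ : Fml (n + 1)} :
      IsDelta0 (n + 1) φ →
      IsDelta0 n (Fml.all (Fml.imp (Fml.mem (0 : Fin (n + 1)) j.succ) φ))

/-- Δ₀^P formulas (Takahashi): quantifiers bounded by ∈ or by ⊆. -/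
inductive IsDelta0P : (n : ℕ) → Fml n → Prop where
  | mem {n : ℕ} (i j : Fin n) : IsDelta0P n (Fml.mem i j)
  | eq {n : ℕ} (i j : Fin n) : IsDelta0P n (Fml.eq i j)
  | not {n : ℕ} {φ : Fml n} : IsDelta0P n φ → IsDelta0P n (Fml.not φ)
  | and {n : ℕ} {φ ψ : Fml n} : IsDelta0P n φ → IsDelta0P n ψ → IsDelta0P n (Fml.and φ ψ)
  | allMem {n : ℕ} (j : Fin n) {φ : Fml (n + 1)} :
      IsDelta0P (n + 1) φ →
      IsDelta0P n (Fml.all (Fml.imp (Fml.mem (0 : Fin (n + 1)) j.succ) φ))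
  | allSub {n : ℕ} (j : Fin n) {φ : Fml (n + 1)} :
      IsDelta0P (n + 1) φ →
      IsDelta0P n (Fml.all (Fml.imp (Fml.subeq (0 : Fin (n + 1)) j.succ) φ))

/-- Levels of the Σ/Π hierarchy over a base class. `true` = Σ, `false` = Π. -/
def IsLvl (base : (n : ℕ) → Fml n → Prop) : Bool → ℕ → (n : ℕ) → Fml n → Prop
  | _, 0, n, φ => base n φ
  | true, k + 1, n, φ => ∃ ψ : Fml (n + 1), φ = Fml.ex ψ ∧ IsLvl base false k (n + 1) ψ
  | false, k + 1, n, φ => ∃ ψ : Fml (n + 1), φ = Fml.all ψ ∧ IsLvl base true k (n + 1) ψ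

def IsSigma (k n : ℕ) (φ : Fml n) : Prop := IsLvl IsDelta0 true k n φ
def IsPi (k n : ℕ) (φ : Fml n) : Prop := IsLvl IsDelta0 false k n φ
def IsSigmaP (k n : ℕ) (φ : Fml n) : Prop := IsLvl IsDelta0P true k n φ
def IsPiP (k n : ℕ) (φ : Fml n) : Prop := IsLvl IsDelta0P false k n φ

/-- B_k^P : closure of Σ_k^P (and Δ₀^P) under Boolean connectives and bounded quantifiers. -/
inductive IsBP (k : ℕ) : (n : ℕ) → Fml n → Prop where
  | ofSigma {n : ℕ} {φ : Fml n} : IsSigmaP k n φ → IsBP k n φ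
  | ofDelta0 {n : ℕ} {φ : Fml n} : IsDelta0P n φ → IsBP k n φ
  | not {n : ℕ} {φ : Fml n} : IsBP k n φ → IsBP k n (Fml.not φ)
  | and {n : ℕ} {φ ψ : Fml n} : IsBP k n φ → IsBP k n ψ → IsBP k n (Fml.and φ ψ)
  | allMem {n : ℕ} (j : Fin n) {φ : Fml (n + 1)} :
      IsBP k (n + 1) φ → IsBP k n (Fml.all (Fml.imp (Fml.mem (0 : Fin (n + 1)) j.succ) φ))
  | allSub {n : ℕ} (j : Fin n) {φ : Fml (n + 1)} :
      IsBP k (n + 1) φ → IsBP k n (Fml.all (Fml.imp (Fml.subeq (0 : Fin (n + 1)) j.succ) φ))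

section Axioms

variable {M : Type*}

def Extensionality (E : M → M → Prop) : Prop :=
  ∀ x y : M, (∀ u, E u x ↔ E u y) → x = y

def PairAx (E : M → M → Prop) : Prop :=
  ∀ u v : M, ∃ x, ∀ w, E w x ↔ (w = u ∨ w = v)

def UnionAx (E : M → M → Prop) : Prop :=
  ∀ x : M, ∃ u, ∀ r, E r u ↔ ∃ v, E v x ∧ E r v

def PowerAx (E : M → M → Prop) : Prop :=
  ∀ u : M, ∃ x, ∀ v, (E v x ↔ ∀ r, E r v → E r u)

def InfinityAx (E : M → M → Prop) : Prop :=
  ∃ x, (∃ e, E e x ∧ ∀ z, ¬ E z e) ∧ ∀ u, E u x → ∃ s, E s x ∧ ∀ w, (E w s ↔ w = u)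

/-- Separation schema for a class `Γ` of formulas. -/
def SepScheme (E : M → M → Prop) (Γ : (n : ℕ) → Fml n → Prop) : Prop :=
  ∀ (n : ℕ) (φ : Fml (n + 1)), Γ (n + 1) φ → ∀ (v : Fin n → M) (a : M),
    ∃ b, ∀ u, E u b ↔ (E u a ∧ Realize E (n + 1) φ (Fin.cons u v))

/-- Collection schema for a class `Γ` of formulas (variable 0 = u, variable 1 = w). -/
def CollScheme (E : M → M → Prop) (Γ : (n : ℕ) → Fml n → Prop) : Prop :=
  ∀ (n : ℕ) (φ : Fml (n + 2)), Γ (n + 2) φ → ∀ (v : Fin n → M) (x : M),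
    (∀ u, E u x → ∃ w, Realize E (n + 2) φ (Fin.cons u (Fin.cons w v))) →
    ∃ y, ∀ u, E u x → ∃ w, E w y ∧ Realize E (n + 2) φ (Fin.cons u (Fin.cons w v))

/-- Foundation schema for a class `Γ` of formulas. -/
def FndScheme (E : M → M → Prop) (Γ : (n : ℕ) → Fml n → Prop) : Prop :=
  ∀ (n : ℕ) (φ : Fml (n + 1)), Γ (n + 1) φ → ∀ (v : Fin n → M),
    (∃ a, Realize E (n + 1) φ (Fin.cons a v)) →
    ∃ a, Realize E (n + 1) φ (Fin.cons a v) ∧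
      ∀ u, E u a → ¬ Realize E (n + 1) φ (Fin.cons u v)

/-- Kripke–Platek set theory. -/
def KP (E : M → M → Prop) : Prop :=
  Extensionality E ∧ PairAx E ∧ UnionAx E ∧ InfinityAx E ∧
  SepScheme E IsDelta0 ∧ CollScheme E IsDelta0 ∧ FndScheme E (IsPi 1)

/-- Power Kripke–Platek set theory KP^P. -/
def KPP (E : M → M → Prop) : Prop :=
  Extensionality E ∧ PairAx E ∧ UnionAx E ∧ PowerAx E ∧ InfinityAx E ∧
  SepScheme E IsDelta0P ∧ CollScheme E IsDelta0P ∧ FndScheme E (IsPiP 1)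

def IsTrans (E : M → M → Prop) (a : M) : Prop := ∀ x, E x a → ∀ y, E y x → E y a

/-- `a` is an ordinal of `(M, E)`: transitive, with transitive members,
linearly ordered by `E`. -/
def IsOrd (E : M → M → Prop) (a : M) : Prop :=
  IsTrans E a ∧ (∀ x, E x a → IsTrans E x) ∧
  (∀ x, E x a → ∀ y, E y a → x = y ∨ E x y ∨ E y x)

def OrdLE (E : M → M → Prop) (a b : M) : Prop := a = b ∨ E a b

/-- `rk` is the (unique, definable) rank function of `(M, E)`:
`rk x` is the least ordinal containing `rk y` for every `y ∈ x`. -/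
def IsRankFn (E : M → M → Prop) (rk : M → M) : Prop :=
  (∀ x, IsOrd E (rk x)) ∧
  (∀ x y, E y x → E (rk y) (rk x)) ∧
  (∀ x α, IsOrd E α → (∀ y, E y x → E (rk y) α) → OrdLE E (rk x) α)

/-- `V` is the cumulative hierarchy function of `(M, E)` relative to the rank
function `rk`: for an ordinal `α`, `V α` consists of the sets of rank `< α`. -/
def IsVFn (E : M → M → Prop) (rk V : M → M) : Prop :=
  ∀ α, IsOrd E α → ∀ x, (E x (V α) ↔ E (rk x) α)

/-- `p` is the internal Kuratowski ordered pair `⟨a, b⟩`. -/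
def IsOPair (E : M → M → Prop) (p a b : M) : Prop :=
  ∀ z, E z p ↔ ((∀ w, E w z ↔ w = a) ∨ (∀ w, E w z ↔ (w = a ∨ w = b)))

/-- `y` is a value of the internal function `f` at `x`. -/
def AppR (E : M → M → Prop) (f x y : M) : Prop := ∃ p, E p f ∧ IsOPair E p x y

/-- `f` is an internal function from `a` to `b`. -/
def IsIntFunc (E : M → M → Prop) (f a b : M) : Prop :=
  (∀ p, E p f → ∃ x y, E x a ∧ E y b ∧ IsOPair E p x y) ∧
  (∀ x, E x a → ∃! y, AppR E f x y)

def IsLimitOrd (E : M → M → Prop) (a : M) : Prop :=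
  IsOrd E a ∧ (∃ z, E z a) ∧ ∀ z, E z a → ∃ z', E z z' ∧ E z' a

/-- `w` is the internal ω of `(M, E)`: the least limit ordinal. -/
def IsOmega (E : M → M → Prop) (w : M) : Prop :=
  IsLimitOrd E w ∧ ∀ z, E z w → ¬ IsLimitOrd E z

end Axioms

section Embeddings

variable {M N : Type*}

def IsEmbedding (E : M → M → Prop) (E' : N → N → Prop) (i : M → N) : Prop :=
  Function.Injective i ∧ ∀ a b : M, E a b ↔ E' (i a) (i b)

def IsInitialEmb (E' : N → N → Prop) (i : M → N) : Prop :=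
  ∀ (m : M) (x : N), E' x (i m) → x ∈ Set.range i

def IsPInitialEmb (E' : N → N → Prop) (i : M → N) : Prop :=
  IsInitialEmb E' i ∧ ∀ (m : M) (x : N), (∀ z, E' z x → E' z (i m)) → x ∈ Set.range i

def IsRankInitialEmb (E' : N → N → Prop) (rk' : N → N) (i : M → N) : Prop :=
  ∀ (m : M) (x : N), OrdLE E' (rk' x) (rk' (i m)) → x ∈ Set.range i

def IsBoundedEmb (E : M → M → Prop) (E' : N → N → Prop) (i : M → N) : Prop :=
  ∃ β, IsOrd E' β ∧ ∀ a : M, IsOrd E a → E' (i a) β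

def IsToplessEmb (E : M → M → Prop) (E' : N → N → Prop) (i : M → N) : Prop :=
  IsBoundedEmb E E' i ∧
  ∀ β, IsOrd E' β → β ∉ Set.range i → ∃ β', IsOrd E' β' ∧ β' ∉ Set.range i ∧ E' β' β

end Embeddings

/-- Semantic equivalence over all models of KP^P (= provable equivalence, by
completeness). -/
def EquivOverKPP (n : ℕ) (φ ψ : Fml n) : Prop :=
  ∀ (M : Type) (E : M → M → Prop), KPP E → ∀ v : Fin n → M,
    (Realize E n φ v ↔ Realize E n ψ v)

/-- `φ` is Σ₁^P up to provable equivalence over KP^P. -/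
def Sigma1PUpto (n : ℕ) (φ : Fml n) : Prop :=
  ∃ ψ : Fml n, IsSigmaP 1 n ψ ∧ EquivOverKPP n φ ψ


/-! ### Auxiliary development -/

section Aux

namespace Fml

def ballMem {n : ℕ} (j : Fin n) (φ : Fml (n + 1)) : Fml n :=
  Fml.all (Fml.imp (Fml.mem (0 : Fin (n + 1)) j.succ) φ)

def bexMem {n : ℕ} (j : Fin n) (φ : Fml (n + 1)) : Fml n :=
  Fml.not (ballMem j (Fml.not φ))

def ballSub {n : ℕ} (j : Fin n) (φ : Fml (n + 1)) : Fml n :=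
  Fml.all (Fml.imp (Fml.subeq (0 : Fin (n + 1)) j.succ) φ)

end Fml

variable {M : Type} {E : M → M → Prop}

@[simp] lemma realize_mem {n} (i j : Fin n) (v : Fin n → M) :
    Realize E n (Fml.mem i j) v ↔ E (v i) (v j) := Iff.rfl

@[simp] lemma realize_eq {n} (i j : Fin n) (v : Fin n → M) :
    Realize E n (Fml.eq i j) v ↔ v i = v j := Iff.rfl

@[simp] lemma realize_not {n} (φ : Fml n) (v : Fin n → M) :
    Realize E n (Fml.not φ) v ↔ ¬ Realize E n φ v := Iff.rfl

@[simp] lemma realize_and {n} (φ ψ : Fml n) (v : Fin n → M) :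
    Realize E n (Fml.and φ ψ) v ↔ Realize E n φ v ∧ Realize E n ψ v := Iff.rfl

@[simp] lemma realize_all {n} (φ : Fml (n + 1)) (v : Fin n → M) :
    Realize E n (Fml.all φ) v ↔ ∀ x, Realize E (n + 1) φ (Fin.cons x v) := Iff.rfl

@[simp] lemma realize_or {n} (φ ψ : Fml n) (v : Fin n → M) :
    Realize E n (Fml.or φ ψ) v ↔ Realize E n φ v ∨ Realize E n ψ v := by
  simp [Fml.or]; tauto

@[simp] lemma realize_imp {n} (φ ψ : Fml n) (v : Fin n → M) :
    Realize E n (Fml.imp φ ψ) v ↔ (Realize E n φ v → Realize E n ψ v) := by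
  simp [Fml.imp]; tauto

@[simp] lemma realize_ex {n} (φ : Fml (n + 1)) (v : Fin n → M) :
    Realize E n (Fml.ex φ) v ↔ ∃ x, Realize E (n + 1) φ (Fin.cons x v) := by
  simp [Fml.ex]

@[simp] lemma realize_subeq {n} (i j : Fin n) (v : Fin n → M) :
    Realize E n (Fml.subeq i j) v ↔ ∀ x, E x (v i) → E x (v j) := by
  simp [Fml.subeq]

@[simp] lemma realize_ballMem {n} (j : Fin n) (φ : Fml (n + 1)) (v : Fin n → M) :
    Realize E n (Fml.ballMem j φ) v ↔
      ∀ x, E x (v j) → Realize E (n + 1) φ (Fin.cons x v) := by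
  simp [Fml.ballMem]

@[simp] lemma realize_bexMem {n} (j : Fin n) (φ : Fml (n + 1)) (v : Fin n → M) :
    Realize E n (Fml.bexMem j φ) v ↔
      ∃ x, E x (v j) ∧ Realize E (n + 1) φ (Fin.cons x v) := by
  simp [Fml.bexMem]

@[simp] lemma realize_ballSub {n} (j : Fin n) (φ : Fml (n + 1)) (v : Fin n → M) :
    Realize E n (Fml.ballSub j φ) v ↔
      ∀ x, (∀ z, E z x → E z (v j)) → Realize E (n + 1) φ (Fin.cons x v) := by
  simp [Fml.ballSub]

lemma realize_rename {m n} (f : Fin m → Fin n) (φ : Fml m) (v : Fin n → M) :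
    Realize E n (rename m n f φ) v ↔ Realize E m φ (v ∘ f) := by
  induction φ generalizing n with
  | mem i j => exact Iff.rfl
  | eq i j => exact Iff.rfl
  | not φ ih => simp [rename, ih]
  | and φ ψ ih₁ ih₂ => simp [rename, ih₁, ih₂]
  | all φ ih =>
      simp only [rename, realize_all]
      refine forall_congr' fun x => ?_
      rw [ih]
      have : (Fin.cons x v : Fin (n+1) → M) ∘
          (fun k => Fin.cases (0 : Fin (n+1)) (fun i => (f i).succ) k) =
          Fin.cons x (v ∘ f) := by
        funext k
        refine Fin.cases ?_ (fun i => ?_) k <;> simp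
      rw [this]

namespace IsDelta0P

lemma or' {n} {φ ψ : Fml n} (h1 : IsDelta0P n φ) (h2 : IsDelta0P n ψ) :
    IsDelta0P n (Fml.or φ ψ) := .not (.and (.not h1) (.not h2))

lemma imp' {n} {φ ψ : Fml n} (h1 : IsDelta0P n φ) (h2 : IsDelta0P n ψ) :
    IsDelta0P n (Fml.imp φ ψ) := or' (.not h1) h2

lemma ballMem' {n} (j : Fin n) {φ : Fml (n + 1)} (h : IsDelta0P (n + 1) φ) :
    IsDelta0P n (Fml.ballMem j φ) := .allMem j h

lemma bexMem' {n} (j : Fin n) {φ : Fml (n + 1)} (h : IsDelta0P (n + 1) φ) :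
    IsDelta0P n (Fml.bexMem j φ) := .not (.allMem j (.not h))

lemma subeq' {n} (i j : Fin n) : IsDelta0P n (Fml.subeq i j) :=
  .allMem i (.mem 0 j.succ)

lemma ballSub' {n} (j : Fin n) {φ : Fml (n + 1)} (h : IsDelta0P (n + 1) φ) :
    IsDelta0P n (Fml.ballSub j φ) := .allSub j h

end IsDelta0P

lemma rename_imp {m n} (f : Fin m → Fin n) (φ ψ : Fml m) :
    rename m n f (Fml.imp φ ψ) = Fml.imp (rename m n f φ) (rename m n f ψ) := rfl

lemma rename_subeq {m n} (f : Fin m → Fin n) (i j : Fin m) :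
    rename m n f (Fml.subeq i j) = Fml.subeq (f i) (f j) := by
  simp [Fml.subeq, rename, Fml.imp, Fml.or]

lemma IsDelta0P.renameD {m} {φ : Fml m} (h : IsDelta0P m φ) :
    ∀ {n} (f : Fin m → Fin n), IsDelta0P n (SetTh.rename m n f φ) := by
  induction h with
  | mem i j => intro n f; exact .mem _ _
  | eq i j => intro n f; exact .eq _ _
  | not _ ih => intro n f; exact .not (ih f)
  | and _ _ ih1 ih2 => intro n f; exact .and (ih1 f) (ih2 f)
  | @allMem m j φ _ ih =>
      intro n f
      have : rename m n f (Fml.all (Fml.imp (Fml.mem (0 : Fin (m+1)) j.succ) φ)) =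
          Fml.all (Fml.imp (Fml.mem (0 : Fin (n+1)) (f j).succ)
            (rename (m+1) (n+1)
              (fun k => Fin.cases (0 : Fin (n+1)) (fun i => (f i).succ) k) φ)) := by
        simp [rename, Fml.imp, Fml.or]
      rw [this]
      exact .allMem (f j) (ih _)
  | @allSub m j φ _ ih =>
      intro n f
      have e1 : rename m n f (Fml.all (Fml.imp (Fml.subeq (0 : Fin (m+1)) j.succ) φ)) =
          Fml.all (Fml.imp
            (rename (m+1) (n+1)
              (fun k => Fin.cases (0 : Fin (n+1)) (fun i => (f i).succ) k)
              (Fml.subeq (0 : Fin (m+1)) j.succ))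
            (rename (m+1) (n+1)
              (fun k => Fin.cases (0 : Fin (n+1)) (fun i => (f i).succ) k) φ)) := rfl
      rw [e1, rename_subeq]
      simp only [Fin.cases_zero, Fin.cases_succ]
      exact .allSub (f j) (ih _)

lemma IsLvl.renameP : ∀ (k : ℕ) (b : Bool) {m} {φ : Fml m},
    IsLvl IsDelta0P b k m φ → ∀ {n} (f : Fin m → Fin n),
    IsLvl IsDelta0P b k n (rename m n f φ) := by
  intro k
  induction k with
  | zero => intro b m φ h n f; cases b <;> exact IsDelta0P.renameD h f
  | succ k ih =>
      intro b m φ h n f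
      cases b with
      | true =>
          obtain ⟨ψ, rfl, hψ⟩ := h
          exact ⟨rename (m+1) (n+1) _ ψ, rfl, ih false hψ _⟩
      | false =>
          obtain ⟨ψ, rfl, hψ⟩ := h
          exact ⟨rename (m+1) (n+1) _ ψ, rfl, ih true hψ _⟩

lemma tail_cons' {α : Type*} {n} (a : α) (y : Fin n → α) :
    Fin.tail (Fin.cons a y : Fin (n+1) → α) = y := by
  funext i; simp [Fin.tail]

@[simp] lemma cons_one {α : Type*} {n} (x : α) (v : Fin (n+1) → α) :
    (Fin.cons x v : Fin (n+2) → α) 1 = v 0 := rfl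
@[simp] lemma cons_two {α : Type*} {n} (x : α) (v : Fin (n+2) → α) :
    (Fin.cons x v : Fin (n+3) → α) 2 = v 1 := rfl
@[simp] lemma cons_three {α : Type*} {n} (x : α) (v : Fin (n+3) → α) :
    (Fin.cons x v : Fin (n+4) → α) 3 = v 2 := rfl
@[simp] lemma cons_four {α : Type*} {n} (x : α) (v : Fin (n+4) → α) :
    (Fin.cons x v : Fin (n+5) → α) 4 = v 3 := rfl
@[simp] lemma cons_five {α : Type*} {n} (x : α) (v : Fin (n+5) → α) :
    (Fin.cons x v : Fin (n+6) → α) 5 = v 4 := rfl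
@[simp] lemma cons_six {α : Type*} {n} (x : α) (v : Fin (n+6) → α) :
    (Fin.cons x v : Fin (n+7) → α) 6 = v 5 := rfl
@[simp] lemma cons_seven {α : Type*} {n} (x : α) (v : Fin (n+7) → α) :
    (Fin.cons x v : Fin (n+8) → α) 7 = v 6 := rfl

end Aux


section Internal

variable {M : Type} {E : M → M → Prop}

lemma kpp_ext (hM : KPP E) : Extensionality E := hM.1
lemma kpp_pair (hM : KPP E) : PairAx E := hM.2.1
lemma kpp_union (hM : KPP E) : UnionAx E := hM.2.2.1
lemma kpp_pow (hM : KPP E) : PowerAx E := hM.2.2.2.1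
lemma kpp_sep0 (hM : KPP E) : SepScheme E IsDelta0P := hM.2.2.2.2.2.1
lemma kpp_coll (hM : KPP E) : CollScheme E IsDelta0P := hM.2.2.2.2.2.2.1
lemma kpp_fnd (hM : KPP E) : FndScheme E (IsPiP 1) := hM.2.2.2.2.2.2.2

/-- existence of an empty set. -/
lemma exEmpty (hM : KPP E) (x : M) : ∃ e : M, ∀ z, ¬ E z e := by
  obtain ⟨b, hb⟩ := kpp_sep0 hM 0 (Fml.not (Fml.eq 0 0)) (.not (.eq 0 0))
    (fun i => i.elim0) x
  exact ⟨b, fun z hz => by simpa using ((hb z).1 hz).2⟩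

lemma binUnion (hM : KPP E) (a b : M) : ∃ c : M, ∀ z, E z c ↔ (E z a ∨ E z b) := by
  obtain ⟨d, hd⟩ := kpp_pair hM a b
  obtain ⟨c, hc⟩ := kpp_union hM d
  refine ⟨c, fun z => ?_⟩
  rw [hc]
  constructor
  · rintro ⟨v, hv, hz⟩
    rcases (hd v).1 hv with rfl | rfl
    · exact Or.inl hz
    · exact Or.inr hz
  · rintro (hz | hz)
    · exact ⟨a, (hd a).2 (Or.inl rfl), hz⟩
    · exact ⟨b, (hd b).2 (Or.inr rfl), hz⟩

/-- set foundation: every nonempty set has an `E`-minimal element. -/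
lemma setFnd (hM : KPP E) (A : M) (hA : ∃ x, E x A) :
    ∃ m, E m A ∧ ∀ u, E u m → ¬ E u A := by
  obtain ⟨x, hx⟩ := hA
  have hpi : IsPiP 1 2 (Fml.all (Fml.mem 1 2)) := ⟨Fml.mem 1 2, rfl, .mem 1 2⟩
  have hre : ∀ (a : M), Realize E 2 (Fml.all (Fml.mem 1 2))
      (Fin.cons a (fun _ => A)) ↔ (∀ _z : M, E a A) := by
    intro a
    exact Iff.rfl
  obtain ⟨m, hm1, hm2⟩ := kpp_fnd hM 1 (Fml.all (Fml.mem 1 2)) hpi (fun _ => A)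
    ⟨x, (hre x).2 (fun _ => hx)⟩
  exact ⟨m, (hre m).1 hm1 m, fun u hu hmem => hm2 u hu ((hre u).2 (fun _ => hmem))⟩

/-- Every set is a subset of a transitive set. -/
lemma transSub (hM : KPP E) (x : M) :
    ∃ t, IsTrans E t ∧ ∀ z, E z x → E z t := by
  by_contra hcon0
  have hcon : ∀ t, ¬ (IsTrans E t ∧ ∀ z, E z x → E z t) := fun t ht => hcon0 ⟨t, ht.1, ht.2⟩
  -- the Π₁ formula "x has no transitive superset"
  set TransF : Fml 2 := Fml.ballMem 0 (Fml.ballMem 0 (Fml.mem 0 2)) with hTransF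
  have hTd : IsDelta0P 2 TransF := .ballMem' _ (.ballMem' _ (.mem 0 2))
  set body : Fml 2 := Fml.not (Fml.and TransF (Fml.subeq 1 0)) with hbody
  have hbd : IsDelta0P 2 body := .not (.and hTd (.subeq' 1 0))
  have hpi : IsPiP 1 1 (Fml.all body) := ⟨body, rfl, hbd⟩
  have hreal : ∀ (y : M) (v : Fin 0 → M), Realize E 1 (Fml.all body) (Fin.cons y v) ↔
      ∀ t, ¬ (IsTrans E t ∧ ∀ z, E z y → E z t) := by
    intro y v
    simp only [realize_all, hbody, realize_not, realize_and, realize_subeq, hTransF,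
      realize_ballMem]
    constructor
    · intro h t ⟨ht1, ht2⟩
      refine h t ⟨fun u hu z hz => ?_, fun z hz => by simpa using ht2 z (by simpa using hz)⟩
      · exact by simpa using ht1 u (by simpa using hu) z (by simpa using hz)
    · intro h t ⟨ht1, ht2⟩
      refine h t ⟨fun u hu z hz => ?_, fun z hz => by simpa using ht2 z (by simpa using hz)⟩
      · exact by simpa using ht1 u (by simpa using hu) z (by simpa using hz)
  obtain ⟨x₀, hx₀, hmin⟩ := kpp_fnd hM 0 (Fml.all body) hpi (fun i => i.elim0)
    ⟨x, (hreal x _).2 hcon⟩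
  rw [hreal] at hx₀
  -- every element of x₀ has a transitive superset
  have hel : ∀ u, E u x₀ → ∃ w, IsTrans E w ∧ ∀ z, E z u → E z w := by
    intro u hu
    by_contra hbad
    exact hmin u hu ((hreal u _).2 (fun w hw => hbad ⟨w, hw.1, hw.2⟩))
  -- collect
  set TransFw : Fml 2 := Fml.ballMem 1 (Fml.ballMem 0 (Fml.mem 0 3)) with hTw
  have hTwd : IsDelta0P 2 TransFw := .ballMem' _ (.ballMem' _ (.mem 0 3))
  set φc : Fml 2 := Fml.and TransFw (Fml.subeq 0 1) with hφc
  have hφcd : IsDelta0P 2 φc := .and hTwd (.subeq' 0 1)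
  have hφcreal : ∀ (u w : M) (v : Fin 0 → M),
      Realize E 2 φc (Fin.cons u (Fin.cons w v)) ↔
      ((IsTrans E w) ∧ ∀ z, E z u → E z w) := by
    intro u w v
    simp only [hφc, realize_and, hTw, realize_ballMem, realize_subeq]
    constructor
    · intro ⟨h1, h2⟩
      exact ⟨fun p hp z hz => by simpa using h1 p (by simpa using hp) z (by simpa using hz),
        fun z hz => by simpa using h2 z (by simpa using hz)⟩
    · intro ⟨h1, h2⟩
      exact ⟨fun p hp z hz => by simpa using h1 p (by simpa using hp) z (by simpa using hz),
        fun z hz => by simpa using h2 z (by simpa using hz)⟩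
  obtain ⟨y, hy⟩ := kpp_coll hM 0 φc hφcd (fun i => i.elim0) x₀
    (fun u hu => by
      obtain ⟨w, hw⟩ := hel u hu
      exact ⟨w, (hφcreal u w _).2 hw⟩)
  -- Y := {w ∈ y : Trans w}
  set TransF1 : Fml 1 := Fml.ballMem 0 (Fml.ballMem 0 (Fml.mem 0 2)) with hT1
  have hT1d : IsDelta0P 1 TransF1 := .ballMem' _ (.ballMem' _ (.mem 0 2))
  obtain ⟨Y, hY⟩ := kpp_sep0 hM 0 TransF1 hT1d (fun i => i.elim0) y
  have hYtrans : ∀ w, E w Y → IsTrans E w := by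
    intro w hw
    have := ((hY w).1 hw).2
    simp only [hT1, realize_ballMem] at this
    exact fun u hu z hz => by simpa using this u (by simpa using hu) z (by simpa using hz)
  obtain ⟨U, hU⟩ := kpp_union hM Y
  obtain ⟨T, hT⟩ := binUnion hM U x₀
  -- T is transitive and x₀ ⊆ T
  have hTsub : ∀ z, E z x₀ → E z T := fun z hz => (hT z).2 (Or.inr hz)
  have hTtrans : IsTrans E T := by
    intro z hz u hu
    rcases (hT z).1 hz with hz' | hz'
    · obtain ⟨w, hwU, hzw⟩ := (hU z).1 hz'
      have hwtr := hYtrans w hwU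
      exact (hT u).2 (Or.inl ((hU u).2 ⟨w, hwU, hwtr z hzw u hu⟩))
    · obtain ⟨w, hwy, hw⟩ := hy z hz'
      have hw' := (hφcreal z w (fun i => i.elim0)).1 hw
      have hwY : E w Y := (hY w).2 ⟨hwy, by
        simp only [hT1, realize_ballMem]
        intro p hp q hq
        simpa using hw'.1 p (by simpa using hp) q (by simpa using hq)⟩
      have : E u w := hw'.2 u hu
      exact (hT u).2 (Or.inl ((hU u).2 ⟨w, hwY, this⟩))
  exact hx₀ T ⟨hTtrans, hTsub⟩

/-- Every set is an element of a transitive set. -/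
lemma transMem (hM : KPP E) (x : M) : ∃ t, IsTrans E t ∧ E x t := by
  obtain ⟨t, ht, hsub⟩ := transSub hM x
  obtain ⟨sx, hsx⟩ := kpp_pair hM x x
  obtain ⟨t', ht'⟩ := binUnion hM t sx
  refine ⟨t', fun z hz u hu => ?_, (ht' x).2 (Or.inr ((hsx x).2 (Or.inl rfl)))⟩
  rcases (ht' z).1 hz with hz' | hz'
  · exact (ht' u).2 (Or.inl (ht z hz' u hu))
  · rcases (hsx z).1 hz' with rfl | rfl <;> exact (ht' u).2 (Or.inl (hsub u hu))

/-- Kuratowski pairs exist. -/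
lemma mkOPair (hM : KPP E) (a b : M) : ∃ p, IsOPair E p a b := by
  obtain ⟨sa, hsa⟩ := kpp_pair hM a a
  obtain ⟨sab, hsab⟩ := kpp_pair hM a b
  obtain ⟨p, hp⟩ := kpp_pair hM sa sab
  refine ⟨p, fun z => ?_⟩
  rw [hp]
  constructor
  · rintro (rfl | rfl)
    · exact Or.inl (fun w => by rw [hsa]; tauto)
    · exact Or.inr (fun w => by rw [hsab])
  · rintro (h | h)
    · left
      exact kpp_ext hM z sa (fun u => by rw [h, hsa]; tauto)
    · right
      exact kpp_ext hM z sab (fun u => by rw [h, hsab])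

lemma opair_inj (hM : KPP E) {p a b a' b' : M}
    (h1 : IsOPair E p a b) (h2 : IsOPair E p a' b') : a = a' ∧ b = b' := by
  obtain ⟨sa, hsa⟩ := kpp_pair hM a a
  obtain ⟨sab, hsab⟩ := kpp_pair hM a b
  obtain ⟨sab', hsab'⟩ := kpp_pair hM a' b'
  have hsaP : E sa p := (h1 sa).2 (Or.inl (fun w => by rw [hsa]; tauto))
  have hsabP : E sab p := (h1 sab).2 (Or.inr (fun w => by rw [hsab]))
  have hsab'P : E sab' p := (h2 sab').2 (Or.inr (fun w => by rw [hsab']))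
  have haa' : a = a' := by
    rcases (h2 sa).1 hsaP with h | h
    · have := (h a').2 rfl
      rw [hsa] at this; tauto
    · have := (h a').2 (Or.inl rfl)
      rw [hsa] at this; tauto
  subst haa'
  have hbb' : b = b' := by
    rcases (h2 sab).1 hsabP with h | h
    · -- sab = {a'} = {a}, so b = a
      have hb : b = a := by
        have := (h b).1 ((hsab b).2 (Or.inr rfl))
        exact this
      -- then sab' ∈ p = {z : z = {a} ∨ z = {a,b}} where b = a
      rcases (h1 sab').1 hsab'P with h' | h'
      · have := (h' b').1 ((hsab' b').2 (Or.inr rfl))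
        rw [this, hb]
      · have := (h' b').1 ((hsab' b').2 (Or.inr rfl))
        rcases this with h'' | h''
        · rw [h'', hb]
        · rw [h'']
    · -- sab = {a, b'}
      have hb : b = a ∨ b = b' := (h b).1 ((hsab b).2 (Or.inr rfl))
      have hb' : b' = a ∨ b' = b := by
        have := (hsab b').1 ((h b').2 (Or.inr rfl))
        tauto
      rcases hb with hb | hb
      · rcases hb' with hb'' | hb''
        · rw [hb, hb'']
        · exact hb''.symm
      · exact hb
  exact ⟨rfl, hbb'⟩

lemma opair_mem (hM : KPP E) {s p a b : M} (hs : IsTrans E s) (hp : E p s)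
    (h : IsOPair E p a b) : E a s ∧ E b s := by
  obtain ⟨sab, hsab⟩ := kpp_pair hM a b
  have hsabP : E sab p := (h sab).2 (Or.inr (fun w => by rw [hsab]))
  have hsabS : E sab s := hs p hp sab hsabP
  exact ⟨hs sab hsabS a ((hsab a).2 (Or.inl rfl)), hs sab hsabS b ((hsab b).2 (Or.inr rfl))⟩

/-- `p` codes the `m`-tuple `x`. -/
def Tup (E : M → M → Prop) : (m : ℕ) → M → (Fin m → M) → Prop
  | 0, p, _ => ∀ z, ¬ E z p
  | m + 1, p, x => ∃ q, IsOPair E p (x 0) q ∧ Tup E m q (Fin.tail x)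

lemma tup_unique (hM : KPP E) : ∀ (m : ℕ) (p : M) (x y : Fin m → M),
    Tup E m p x → Tup E m p y → x = y := by
  intro m
  induction m with
  | zero => intro p x y _ _; funext i; exact i.elim0
  | succ m ih =>
      rintro p x y ⟨q, hq, htq⟩ ⟨q', hq', htq'⟩
      obtain ⟨h0, hqq⟩ := opair_inj hM hq hq'
      subst hqq
      have := ih q (Fin.tail x) (Fin.tail y) htq htq'
      funext i
      refine Fin.cases ?_ (fun i => ?_) i
      · exact h0
      · exact congrFun this i

lemma tup_exists (hM : KPP E) : ∀ (m : ℕ) (x : Fin m → M) (d : M), ∃ p, Tup E m p x := by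
  intro m
  induction m with
  | zero =>
      intro x d
      obtain ⟨e, he⟩ := exEmpty hM d
      exact ⟨e, he⟩
  | succ m ih =>
      intro x d
      obtain ⟨q, hq⟩ := ih (Fin.tail x) d
      obtain ⟨p, hp⟩ := mkOPair hM (x 0) q
      exact ⟨p, q, hp, hq⟩

/-- tail components of tuples are in any transitive set containing the tuple. -/
lemma tup_mem (hM : KPP E) {s : M} (hs : IsTrans E s) :
    ∀ (m : ℕ) (p : M) (x : Fin m → M), Tup E m p x → E p s →
      (∀ i, E (x i) s) := by
  intro m
  induction m with
  | zero => intro p x _ _ i; exact i.elim0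
  | succ m ih =>
      rintro p x ⟨q, hq, htq⟩ hps i
      obtain ⟨h1, h2⟩ := opair_mem hM hs hps hq
      refine Fin.cases ?_ (fun i => ?_) i
      · exact h1
      · exact ih q (Fin.tail x) htq h2 i

/-- there is a transitive set containing all `m`-tuples over `t` (and `t` itself). -/
lemma tupClose (hM : KPP E) (m : ℕ) (t : M) :
    ∃ s, IsTrans E s ∧ E t s ∧
      (∀ (x : Fin m → M) (p : M), (∀ i, E (x i) t) → Tup E m p x → E p s) := by
  induction m with
  | zero =>
      obtain ⟨e, he⟩ := exEmpty hM t
      obtain ⟨d, hd⟩ := kpp_pair hM t e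
      obtain ⟨s, hs, hds⟩ := transMem hM d
      refine ⟨s, hs, hs d hds t ((hd t).2 (Or.inl rfl)), fun x p hx hp => ?_⟩
      have : p = e := kpp_ext hM p e (fun u => by
        constructor
        · intro h; exact absurd h (hp u)
        · intro h; exact absurd h (he u))
      rw [this]
      exact hs d hds e ((hd e).2 (Or.inr rfl))
  | succ m ih =>
      obtain ⟨s0, hs0, hts0, hclose⟩ := ih
      obtain ⟨c, hc⟩ := binUnion hM t s0
      obtain ⟨P1, hP1⟩ := kpp_pow hM c
      obtain ⟨P2, hP2⟩ := kpp_pow hM P1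
      obtain ⟨d, hd⟩ := kpp_pair hM t P2
      obtain ⟨s, hs, hds⟩ := transMem hM d
      have htP : E t s := hs d hds t ((hd t).2 (Or.inl rfl))
      have hP2s : E P2 s := hs d hds P2 ((hd P2).2 (Or.inr rfl))
      refine ⟨s, hs, htP, ?_⟩
      rintro x p hx ⟨q, hq, htq⟩
      have hqs0 : E q s0 := hclose (Fin.tail x) q (fun i => hx i.succ) htq
      -- p = {{x0},{x0,q}} ⊆ P1, so p ∈ P2
      have hpP2 : E p P2 := by
        rw [hP2]
        intro z hz
        rcases (hq z).1 hz with h | h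
        · rw [hP1]
          intro w hw
          rcases (h w).1 hw with rfl
          exact (hc _).2 (Or.inl (hx 0))
        · rw [hP1]
          intro w hw
          rcases (h w).1 hw with rfl | rfl
          · exact (hc _).2 (Or.inl (hx 0))
          · exact (hc _).2 (Or.inr hqs0)
      exact hs P2 hP2s p hpP2

end Internal


section Absorb

variable {M : Type} {E : M → M → Prop}

/-- Absorption of a functionally-guarded bounded universal quantifier into a
level-`k` formula. -/
lemma absorb (hne : Nonempty M) :
    ∀ (k : ℕ) (b : Bool) (n : ℕ) (ψ : Fml (n+1)), IsLvl IsDelta0P b k (n+1) ψ →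
    ∀ (γ : Fml (n+1)), IsDelta0P (n+1) γ → ∀ (jt : Fin n),
    (∀ (w : Fin n → M) (x y : M),
        (E x (w jt) ∧ Realize E (n+1) γ (Fin.cons x w)) →
        (E y (w jt) ∧ Realize E (n+1) γ (Fin.cons y w)) → x = y) →
    ∃ θ : Fml n, IsLvl IsDelta0P b k n θ ∧
      ∀ v : Fin n → M, (Realize E n θ v ↔
        ∀ x, E x (v jt) → Realize E (n+1) γ (Fin.cons x v) →
          Realize E (n+1) ψ (Fin.cons x v)) := by
  intro k
  induction k with
  | zero =>
      intro b n ψ hψ γ hγ jt _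
      have hψ' : IsDelta0P (n+1) ψ := by cases b <;> exact hψ
      have hlvl : IsLvl IsDelta0P b 0 n (Fml.ballMem jt (Fml.imp γ ψ)) := by
        cases b <;> exact IsDelta0P.ballMem' jt (.imp' hγ hψ')
      refine ⟨Fml.ballMem jt (Fml.imp γ ψ), hlvl, fun v => ?_⟩
      simp only [realize_ballMem, realize_imp]
  | succ k ih =>
      intro b n ψ hψ γ hγ jt hfun
      -- the embedding inserting a fresh variable at position 1
      have hemb : ∀ (x y : M) (v : Fin n → M),
          (Fin.cons x (Fin.cons y v) : Fin (n+2) → M) ∘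
            (Fin.cons (0 : Fin (n+2)) (fun i : Fin n => i.succ.succ)) =
          Fin.cons x v := by
        intro x y v
        funext i
        refine Fin.cases ?_ (fun i => ?_) i
        · simp
        · simp
      have hsw : ∀ (x y : M) (v : Fin n → M),
          (Fin.cons x (Fin.cons y v) : Fin (n+2) → M) ∘
            (Fin.cons (1 : Fin (n+2)) (Fin.cons (0 : Fin (n+2))
              (fun i : Fin n => i.succ.succ))) =
          Fin.cons y (Fin.cons x v) := by
        intro x y v
        funext i
        refine Fin.cases ?_ (fun i => Fin.cases ?_ (fun i' => ?_) i) i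
        · simp
        · simp
        · simp
      set emb : Fin (n+1) → Fin (n+2) :=
        Fin.cons (0 : Fin (n+2)) (fun i : Fin n => i.succ.succ) with hembdef
      set sw : Fin (n+2) → Fin (n+2) :=
        Fin.cons (1 : Fin (n+2)) (Fin.cons (0 : Fin (n+2))
          (fun i : Fin n => i.succ.succ)) with hswdef
      have hγ' : IsDelta0P (n+2) (rename (n+1) (n+2) emb γ) := hγ.renameD emb
      have hγ'real : ∀ (x y : M) (v : Fin n → M),
          Realize E (n+2) (rename (n+1) (n+2) emb γ) (Fin.cons x (Fin.cons y v)) ↔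
          Realize E (n+1) γ (Fin.cons x v) := by
        intro x y v
        rw [realize_rename, hemb]
      have hfun' : ∀ (w : Fin (n+1) → M) (x y : M),
          (E x (w jt.succ) ∧ Realize E (n+2) (rename (n+1) (n+2) emb γ) (Fin.cons x w)) →
          (E y (w jt.succ) ∧ Realize E (n+2) (rename (n+1) (n+2) emb γ) (Fin.cons y w)) →
          x = y := by
        intro w x y h1 h2
        have hw : w = Fin.cons (w 0) (Fin.tail w) := (Fin.cons_self_tail w).symm
        rw [hw] at h1 h2
        rw [hγ'real] at h1 h2
        exact hfun (Fin.tail w) x y (by simpa using h1) (by simpa using h2)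
      cases b with
      | true =>
          obtain ⟨χ, rfl, hχ⟩ := hψ
          have hχ' : IsLvl IsDelta0P false k (n+2) (rename (n+2) (n+2) sw χ) :=
            IsLvl.renameP k false hχ sw
          obtain ⟨θ', hθ'lvl, hθ'⟩ := ih false (n+1) (rename (n+2) (n+2) sw χ) hχ'
            (rename (n+1) (n+2) emb γ) hγ' jt.succ hfun'
          refine ⟨Fml.ex θ', ⟨θ', rfl, hθ'lvl⟩, fun v => ?_⟩
          rw [realize_ex]
          have hstep : ∀ y : M, Realize E (n+1) θ' (Fin.cons y v) ↔
              ∀ x, E x (v jt) → Realize E (n+1) γ (Fin.cons x v) →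
                Realize E (n+2) χ (Fin.cons y (Fin.cons x v)) := by
            intro y
            rw [hθ' (Fin.cons y v)]
            refine forall_congr' fun x => ?_
            rw [hγ'real, realize_rename, hsw]
            rfl
          constructor
          · rintro ⟨y, hy⟩ x hx1 hx2
            rw [realize_ex]
            exact ⟨y, (hstep y).1 hy x hx1 hx2⟩
          · intro h
            by_cases hex : ∃ x, E x (v jt) ∧ Realize E (n+1) γ (Fin.cons x v)
            · obtain ⟨x₀, hx₀1, hx₀2⟩ := hex
              have := h x₀ hx₀1 hx₀2
              rw [realize_ex] at this
              obtain ⟨y, hy⟩ := this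
              refine ⟨y, (hstep y).2 fun x hx1 hx2 => ?_⟩
              have hxx : x = x₀ := hfun v x x₀ ⟨hx1, hx2⟩ ⟨hx₀1, hx₀2⟩
              rw [hxx]
              exact hy
            · obtain ⟨y⟩ := hne
              exact ⟨y, (hstep y).2 fun x hx1 hx2 => absurd ⟨x, hx1, hx2⟩ hex⟩
      | false =>
          obtain ⟨χ, rfl, hχ⟩ := hψ
          have hχ' : IsLvl IsDelta0P true k (n+2) (rename (n+2) (n+2) sw χ) :=
            IsLvl.renameP k true hχ sw
          obtain ⟨θ', hθ'lvl, hθ'⟩ := ih true (n+1) (rename (n+2) (n+2) sw χ) hχ'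
            (rename (n+1) (n+2) emb γ) hγ' jt.succ hfun'
          refine ⟨Fml.all θ', ⟨θ', rfl, hθ'lvl⟩, fun v => ?_⟩
          rw [realize_all]
          have hstep : ∀ y : M, Realize E (n+1) θ' (Fin.cons y v) ↔
              ∀ x, E x (v jt) → Realize E (n+1) γ (Fin.cons x v) →
                Realize E (n+2) χ (Fin.cons y (Fin.cons x v)) := by
            intro y
            rw [hθ' (Fin.cons y v)]
            refine forall_congr' fun x => ?_
            rw [hγ'real, realize_rename, hsw]
            rfl
          constructor
          · intro h x hx1 hx2
            rw [realize_all]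
            intro y
            exact (hstep y).1 (h y) x hx1 hx2
          · intro h y
            refine (hstep y).2 fun x hx1 hx2 => ?_
            have := h x hx1 hx2
            rw [realize_all] at this
            exact this y

end Absorb


section PairFml

/-- `v iz = {v ia}` as a bounded formula. -/
def SingF {n : ℕ} (iz ia : Fin n) : Fml n :=
  Fml.and (Fml.mem ia iz) (Fml.ballMem iz (Fml.eq 0 ia.succ))

/-- `v iz = {v ia, v ib}` as a bounded formula. -/
def DubF {n : ℕ} (iz ia ib : Fin n) : Fml n :=
  Fml.and (Fml.and (Fml.mem ia iz) (Fml.mem ib iz))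
    (Fml.ballMem iz (Fml.or (Fml.eq 0 ia.succ) (Fml.eq 0 ib.succ)))

/-- `v ip = ⟨v ia, v ib⟩` (Kuratowski) as a bounded formula. -/
def OPairF {n : ℕ} (ip ia ib : Fin n) : Fml n :=
  Fml.and (Fml.ballMem ip (Fml.or (SingF 0 ia.succ) (DubF 0 ia.succ ib.succ)))
    (Fml.and (Fml.bexMem ip (SingF 0 ia.succ)) (Fml.bexMem ip (DubF 0 ia.succ ib.succ)))

lemma SingF_delta0 {n} (iz ia : Fin n) : IsDelta0P n (SingF iz ia) :=
  .and (.mem _ _) (.ballMem' _ (.eq _ _))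

lemma DubF_delta0 {n} (iz ia ib : Fin n) : IsDelta0P n (DubF iz ia ib) :=
  .and (.and (.mem _ _) (.mem _ _)) (.ballMem' _ (.or' (.eq _ _) (.eq _ _)))

lemma OPairF_delta0 {n} (ip ia ib : Fin n) : IsDelta0P n (OPairF ip ia ib) :=
  .and (.ballMem' _ (.or' (SingF_delta0 _ _) (DubF_delta0 _ _ _)))
    (.and (.bexMem' _ (SingF_delta0 _ _)) (.bexMem' _ (DubF_delta0 _ _ _)))

variable {M : Type} {E : M → M → Prop}

lemma realize_SingF {n} (iz ia : Fin n) (v : Fin n → M) :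
    Realize E n (SingF iz ia) v ↔ ∀ w, E w (v iz) ↔ w = v ia := by
  simp only [SingF, realize_and, realize_mem, realize_ballMem, realize_eq,
    Fin.cons_zero, Fin.cons_succ]
  constructor
  · rintro ⟨h1, h2⟩ w
    exact ⟨fun hw => h2 w hw, fun hw => hw ▸ h1⟩
  · intro h
    exact ⟨(h _).2 rfl, fun w hw => (h w).1 hw⟩

lemma realize_DubF {n} (iz ia ib : Fin n) (v : Fin n → M) :
    Realize E n (DubF iz ia ib) v ↔ ∀ w, E w (v iz) ↔ (w = v ia ∨ w = v ib) := by
  simp only [DubF, realize_and, realize_mem, realize_ballMem, realize_or, realize_eq,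
    Fin.cons_zero, Fin.cons_succ]
  constructor
  · rintro ⟨⟨h1, h1'⟩, h2⟩ w
    refine ⟨fun hw => h2 w hw, ?_⟩
    rintro (rfl | rfl)
    · exact h1
    · exact h1'
  · intro h
    exact ⟨⟨(h _).2 (Or.inl rfl), (h _).2 (Or.inr rfl)⟩, fun w hw => (h w).1 hw⟩

lemma realize_OPairF (hM : KPP E) {n} (ip ia ib : Fin n) (v : Fin n → M) :
    Realize E n (OPairF ip ia ib) v ↔ IsOPair E (v ip) (v ia) (v ib) := by
  have hsing : ∀ (x : M), Realize E (n+1) (SingF (0 : Fin (n+1)) ia.succ)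
      (Fin.cons x v) ↔ ∀ w, E w x ↔ w = v ia := by
    intro x
    rw [realize_SingF]
    simp
  have hdub : ∀ (x : M), Realize E (n+1) (DubF (0 : Fin (n+1)) ia.succ ib.succ)
      (Fin.cons x v) ↔ ∀ w, E w x ↔ (w = v ia ∨ w = v ib) := by
    intro x
    rw [realize_DubF]
    simp
  simp only [OPairF, realize_and, realize_ballMem, realize_bexMem, realize_or]
  constructor
  · rintro ⟨hall, ⟨z1, hz1, hz1'⟩, ⟨z2, hz2, hz2'⟩⟩ z
    rw [hsing] at hz1'
    rw [hdub] at hz2'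
    constructor
    · intro hz
      rcases hall z hz with h | h
      · exact Or.inl ((hsing z).1 h)
      · exact Or.inr ((hdub z).1 h)
    · rintro (h | h)
      · have : z = z1 := kpp_ext hM z z1 (fun w => by rw [h w, hz1' w])
        rw [this]; exact hz1
      · have : z = z2 := kpp_ext hM z z2 (fun w => by rw [h w, hz2' w])
        rw [this]; exact hz2
  · intro h
    obtain ⟨sa, hsa⟩ := kpp_pair hM (v ia) (v ia)
    obtain ⟨sab, hsab⟩ := kpp_pair hM (v ia) (v ib)
    refine ⟨?_, ⟨sa, ?_, ?_⟩, ⟨sab, ?_, ?_⟩⟩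
    · intro z hz
      rcases (h z).1 hz with h' | h'
      · exact Or.inl ((hsing z).2 h')
      · exact Or.inr ((hdub z).2 h')
    · exact (h sa).2 (Or.inl (fun w => by rw [hsa]; tauto))
    · rw [hsing]; intro w; rw [hsa]; tauto
    · exact (h sab).2 (Or.inr (fun w => by rw [hsab]))
    · rw [hdub]; intro w; rw [hsab]

end PairFml


section Guards

variable {M : Type} {E : M → M → Prop}

/-- `x` is the `i`-th component of the tuple `p` (meta-level). -/
def Comp (E : M → M → Prop) : ℕ → M → M → Prop
  | 0, p, x => ∃ q, IsOPair E p x q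
  | i + 1, p, x => ∃ q w, IsOPair E p w q ∧ Comp E i q x

/-- the guard formula: `v ix` is the `i`-th component of `v ip`, with all the
intermediate tails bounded by `v is`. -/
def GF : (i : ℕ) → {n : ℕ} → (ix ip is : Fin n) → Fml n
  | 0, _, ix, ip, is => Fml.bexMem is (OPairF ip.succ ix.succ 0)
  | i + 1, _, ix, ip, is =>
      Fml.bexMem is (Fml.and (Fml.bexMem is.succ (OPairF ip.succ.succ 0 1))
        (GF i ix.succ 0 is.succ))

lemma GF_delta0 : ∀ (i : ℕ) {n} (ix ip is : Fin n), IsDelta0P n (GF i ix ip is)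
  | 0, _, ix, ip, is => .bexMem' _ (OPairF_delta0 _ _ _)
  | i + 1, _, ix, ip, is =>
      .bexMem' _ (.and (.bexMem' _ (OPairF_delta0 _ _ _)) (GF_delta0 i _ _ _))

lemma realize_GF (hM : KPP E) : ∀ (i : ℕ) {n} (ix ip is : Fin n) (v : Fin n → M),
    IsTrans E (v is) → E (v ip) (v is) →
    (Realize E n (GF i ix ip is) v ↔ Comp E i (v ip) (v ix)) := by
  intro i
  induction i with
  | zero =>
      intro n ix ip is v hs hps
      simp only [GF, realize_bexMem]
      constructor
      · rintro ⟨q, hqs, hq⟩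
        rw [realize_OPairF hM] at hq
        simp only [Fin.cons_succ, Fin.cons_zero] at hq
        exact ⟨q, hq⟩
      · rintro ⟨q, hq⟩
        refine ⟨q, (opair_mem hM hs hps hq).2, ?_⟩
        rw [realize_OPairF hM]
        simpa using hq
  | succ i ih =>
      intro n ix ip is v hs hps
      simp only [GF, realize_bexMem, realize_and]
      constructor
      · rintro ⟨q, hqs, ⟨w, hws, hw⟩, hrec⟩
        rw [realize_OPairF hM] at hw
        simp only [Fin.cons_succ, Fin.cons_zero] at hw
        have := (ih ix.succ 0 is.succ (Fin.cons q v) (by simpa using hs)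
          (by simpa using hqs)).1 hrec
        simp only [Fin.cons_succ, Fin.cons_zero] at this
        exact ⟨q, w, hw, this⟩
      · rintro ⟨q, w, hw, hcomp⟩
        have hqmem := (opair_mem hM hs hps hw).2
        have hwmem := (opair_mem hM hs hps hw).1
        refine ⟨q, hqmem, ⟨w, hwmem, ?_⟩, ?_⟩
        · rw [realize_OPairF hM]
          simpa using hw
        · refine (ih ix.succ 0 is.succ (Fin.cons q v) (by simpa using hs)
            (by simpa using hqmem)).2 ?_
          simpa using hcomp

lemma comp_unique (hM : KPP E) : ∀ (i : ℕ) (p x y : M),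
    Comp E i p x → Comp E i p y → x = y := by
  intro i
  induction i with
  | zero =>
      rintro p x y ⟨q, hq⟩ ⟨q', hq'⟩
      exact (opair_inj hM hq hq').1
  | succ i ih =>
      rintro p x y ⟨q, w, hw, hc⟩ ⟨q', w', hw', hc'⟩
      obtain ⟨-, rfl⟩ := opair_inj hM hw hw'
      exact ih q x y hc hc'

/-- components of an `m`-tuple. -/
lemma tup_comp (hM : KPP E) : ∀ (m : ℕ) (p : M) (x : Fin m → M), Tup E m p x →
    ∀ (i : Fin m) (y : M), Comp E i.val p y ↔ y = x i := by
  intro m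
  induction m with
  | zero => intro p x _ i; exact i.elim0
  | succ m ih =>
      rintro p x ⟨q, hq, htq⟩ i y
      refine Fin.cases ?_ (fun i => ?_) i
      · constructor
        · rintro ⟨q', hq'⟩
          exact (opair_inj hM hq' hq).1
        · rintro rfl
          exact ⟨q, hq⟩
      · constructor
        · rintro ⟨q', w, hw, hc⟩
          obtain ⟨-, rfl⟩ := opair_inj hM hw hq
          have := (ih q' (Fin.tail x) htq i y).1 hc
          simpa [Fin.tail] using this
        · rintro rfl
          refine ⟨q, x 0, hq, ?_⟩
          exact (ih q (Fin.tail x) htq i (x i.succ)).2 rfl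

/-- uniqueness of the guarded variable, for arbitrary valuations. -/
lemma GF_unique (hM : KPP E) : ∀ (i : ℕ) {n} (ix ip is : Fin n), ip ≠ ix →
    ∀ (v v' : Fin n → M),
    (∀ j, j ≠ ix → v j = v' j) →
    Realize E n (GF i ix ip is) v → Realize E n (GF i ix ip is) v' →
    v ix = v' ix := by
  intro i
  induction i with
  | zero =>
      intro n ix ip is hix v v' hvv h h'
      simp only [GF, realize_bexMem] at h h'
      obtain ⟨q, hqs, hq⟩ := h
      obtain ⟨q', hqs', hq'⟩ := h'
      rw [realize_OPairF hM] at hq hq'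
      simp only [Fin.cons_succ, Fin.cons_zero] at hq hq'
      rw [hvv ip hix] at hq
      exact (opair_inj hM hq hq').1
  | succ i ih =>
      intro n ix ip is hix v v' hvv h h'
      simp only [GF, realize_bexMem, realize_and] at h h'
      obtain ⟨q, hqs, ⟨w, hws, hw⟩, hrec⟩ := h
      obtain ⟨q', hqs', ⟨w', hws', hw'⟩, hrec'⟩ := h'
      rw [realize_OPairF hM] at hw hw'
      simp only [Fin.cons_succ, Fin.cons_zero] at hw hw'
      rw [hvv ip hix] at hw
      obtain ⟨-, rfl⟩ := opair_inj hM hw hw'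
      have := ih ix.succ 0 is.succ (Ne.symm (Fin.succ_ne_zero ix))
        (Fin.cons q v) (Fin.cons q v')
        (fun j hj => by
          refine Fin.cases ?_ (fun j' hj' => ?_) j hj
          · simp
          · simp only [Fin.cons_succ]
            exact hvv j' (fun hh => hj' (by rw [hh])))
        hrec hrec'
      simpa using this

end Guards


section TupF

variable {M : Type} {E : M → M → Prop}

/-- `v ip` is an `m`-tuple with components in `v it` (tails bounded by `v is`). -/
def TupDF : (m : ℕ) → {n : ℕ} → (ip it is : Fin n) → Fml n
  | 0, _, ip, _, _ => Fml.ballMem ip (Fml.not (Fml.eq 0 0))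
  | m + 1, _, ip, it, is =>
      Fml.bexMem it (Fml.bexMem is.succ
        (Fml.and (OPairF ip.succ.succ 1 0) (TupDF m 0 it.succ.succ is.succ.succ)))

lemma TupDF_delta0 : ∀ (m : ℕ) {n} (ip it is : Fin n), IsDelta0P n (TupDF m ip it is)
  | 0, _, ip, it, is => .ballMem' _ (.not (.eq 0 0))
  | m + 1, _, ip, it, is =>
      .bexMem' _ (.bexMem' _ (.and (OPairF_delta0 _ _ _) (TupDF_delta0 m _ _ _)))

lemma realize_TupDF (hM : KPP E) : ∀ (m : ℕ) {n} (ip it is : Fin n) (v : Fin n → M),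
    IsTrans E (v is) → E (v ip) (v is) →
    (Realize E n (TupDF m ip it is) v ↔
      ∃ x : Fin m → M, (∀ i, E (x i) (v it)) ∧ Tup E m (v ip) x) := by
  intro m
  induction m with
  | zero =>
      intro n ip it is v _ _
      simp only [TupDF, realize_ballMem, realize_not, realize_eq]
      constructor
      · intro h
        exact ⟨fun i => i.elim0, fun i => i.elim0, fun z hz => h z hz trivial⟩
      · rintro ⟨x, -, hx⟩ z hz
        exact absurd hz (hx z)
  | succ m ih =>
      intro n ip it is v hs hps
      simp only [TupDF, realize_bexMem, realize_and]
      constructor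
      · rintro ⟨x0, hx0, q, hq, hpair, hrec⟩
        rw [realize_OPairF hM] at hpair
        simp only [Fin.cons_succ, Fin.cons_zero] at hpair hq
        have := (ih 0 it.succ.succ is.succ.succ (Fin.cons q (Fin.cons x0 v))
          (by simpa using hs) (by simpa using hq)).1 hrec
        simp only [Fin.cons_zero, Fin.cons_succ] at this
        obtain ⟨y, hy, hty⟩ := this
        refine ⟨(Fin.cons x0 y : Fin (m+1) → M), fun i => ?_, q, by simpa using hpair, ?_⟩
        · refine Fin.cases ?_ (fun i => ?_) i <;> simp [hx0, hy]
        · have h1 : Fin.tail (Fin.cons x0 y : Fin (m+1) → M) = y := by funext i; simp [Fin.tail]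
          rw [h1]
          exact hty
      · rintro ⟨x, hx, q, hq, htq⟩
        have hqmem := (opair_mem hM hs hps hq).2
        refine ⟨x 0, hx 0, q, by simpa using hqmem, ?_, ?_⟩
        · rw [realize_OPairF hM]
          simpa using hq
        · refine (ih 0 it.succ.succ is.succ.succ (Fin.cons q (Fin.cons (x 0) v))
            (by simpa using hs) (by simpa using hqmem)).2 ?_
          refine ⟨Fin.tail x, fun i => ?_, ?_⟩
          · simpa [Fin.tail] using hx i.succ
          · simpa using htq

/-- prepend an `m`-tuple of values to a valuation of length 3. -/
def consAll3 : {m : ℕ} → (Fin m → M) → (Fin 3 → M) → Fin (m + 3) → M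
  | 0, _, v => v
  | _ + 1, x, v => Fin.cons (x 0) (consAll3 (Fin.tail x) v)

lemma consAll3_cons {m} (a : M) (y : Fin m → M) (v : Fin 3 → M) :
    consAll3 (Fin.cons a y) v = Fin.cons a (consAll3 y v) := by
  have h1 : Fin.tail (Fin.cons a y : Fin (m+1) → M) = y := by funext i; simp [Fin.tail]
  have h2 : (consAll3 (Fin.cons a y) v : Fin (m+1+3) → M) =
      Fin.cons ((Fin.cons a y : Fin (m+1) → M) 0)
        (consAll3 (Fin.tail (Fin.cons a y : Fin (m+1) → M)) v) := rfl
  rw [h2, Fin.cons_zero, h1]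

lemma consAll3_lo : ∀ {m} (x : Fin m → M) (v : Fin 3 → M) (lv : ℕ)
    (hl : lv < m) (h : lv < m + 3), consAll3 x v ⟨lv, h⟩ = x ⟨lv, hl⟩ := by
  intro m
  induction m with
  | zero => intro x v lv hl h; exact absurd hl (Nat.not_lt_zero lv)
  | succ m ih =>
      intro x v lv hl h
      have hdef : (consAll3 x v : Fin (m+1+3) → M) =
          Fin.cons (x 0) (consAll3 (Fin.tail x) v) := rfl
      cases lv with
      | zero =>
          rw [hdef]
          have e0 : (⟨0, h⟩ : Fin (m+1+3)) = 0 := rfl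
          have e0' : (⟨0, hl⟩ : Fin (m+1)) = 0 := rfl
          rw [e0, e0', Fin.cons_zero]
      | succ lv =>
          rw [hdef]
          have e1 : (⟨lv+1, h⟩ : Fin (m+1+3)) = Fin.succ ⟨lv, by omega⟩ := rfl
          rw [e1, Fin.cons_succ, ih (Fin.tail x) v lv (by omega) (by omega)]
          simp only [Fin.tail]
          congr 1

lemma consAll3_hi : ∀ {m} (x : Fin m → M) (v : Fin 3 → M) (i : Fin 3)
    (h : m + i.val < m + 3), consAll3 x v ⟨m + i.val, h⟩ = v i := by
  intro m
  induction m with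
  | zero =>
      intro x v i h
      show v ⟨0 + i.val, h⟩ = v i
      exact congrArg v (Fin.ext (by simp))
  | succ m ih =>
      intro x v i h
      have hdef : (consAll3 x v : Fin (m+1+3) → M) =
          Fin.cons (x 0) (consAll3 (Fin.tail x) v) := rfl
      rw [hdef]
      have e1 : (⟨m + 1 + i.val, h⟩ : Fin (m+1+3)) =
          Fin.succ ⟨m + i.val, by omega⟩ := Fin.ext (by simp; omega)
      rw [e1, Fin.cons_succ, ih (Fin.tail x) v i (by omega)]

end TupF


section TraceAux

variable {M : Type} {E : M → M → Prop}

lemma cons_mk_succ {α : Type*} {n} (x : α) (v : Fin n → α) (k : ℕ)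
    (h : k + 1 < n + 1) (h' : k < n) :
    (Fin.cons x v : Fin (n+1) → α) ⟨k+1, h⟩ = v ⟨k, h'⟩ := by
  have e : (⟨k+1, h⟩ : Fin (n+1)) = Fin.succ ⟨k, h'⟩ := rfl
  rw [e, Fin.cons_succ]

lemma consAll3_hi' {m} (x : Fin m → M) (v : Fin 3 → M) (iv : ℕ) (hiv : iv < 3)
    (h : m + iv < m + 3) : consAll3 x v ⟨m + iv, h⟩ = v ⟨iv, hiv⟩ :=
  consAll3_hi x v ⟨iv, hiv⟩ h

lemma traceAux (hM : KPP E) (hne : Nonempty M) {b : Bool} {j : ℕ} :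
    ∀ (m i₀ : ℕ) (ψ : Fml (m+3)), IsLvl IsDelta0P b j (m+3) ψ →
    ∃ θ : Fml 3, IsLvl IsDelta0P b j 3 θ ∧
      ∀ (w : Fin 3 → M), IsTrans E (w 2) → E (w 0) (w 2) →
        (Realize E 3 θ w ↔
          ∀ x : Fin m → M, (∀ l, E (x l) (w 1)) →
            (∀ l : Fin m, Comp E (i₀ + l.val) (w 0) (x l)) →
            Realize E (m+3) ψ (consAll3 x w)) := by
  intro m
  induction m with
  | zero =>
      intro i₀ ψ hψ
      refine ⟨ψ, hψ, fun w _ _ => ?_⟩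
      constructor
      · intro h x _ _
        exact h
      · intro h
        exact h (fun l => l.elim0) (fun l => l.elim0) (fun l => l.elim0)
  | succ m ih =>
      intro i₀ ψ hψ
      set ppos : Fin (m+4) := ⟨m+1, by omega⟩ with hppos
      set spos : Fin (m+4) := ⟨m+3, by omega⟩ with hspos
      set jt : Fin (m+3) := ⟨m+1, by omega⟩ with hjt
      set γ : Fml (m+4) := GF i₀ (0 : Fin (m+4)) ppos spos with hγ
      have hppne : ppos ≠ (0 : Fin (m+4)) := by
        simp [hppos, Fin.ext_iff]
      have hfun : ∀ (w' : Fin (m+3) → M) (x y : M),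
          (E x (w' jt) ∧ Realize E (m+4) γ (Fin.cons x w')) →
          (E y (w' jt) ∧ Realize E (m+4) γ (Fin.cons y w')) → x = y := by
        rintro w' x y ⟨-, hx⟩ ⟨-, hy⟩
        have := GF_unique hM i₀ (0 : Fin (m+4)) ppos spos hppne
          (Fin.cons x w') (Fin.cons y w')
          (fun l hl => by
            refine Fin.cases ?_ (fun l' _ => ?_) l hl
            · intro h0; exact absurd rfl h0
            · simp)
          hx hy
        simpa using this
      obtain ⟨θ₁, hθ₁lvl, hθ₁⟩ := absorb hne j b (m+3) ψ hψ γ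
        (GF_delta0 _ _ _ _) jt hfun
      obtain ⟨θ, hθlvl, hθ⟩ := ih (i₀+1) θ₁ hθ₁lvl
      refine ⟨θ, hθlvl, fun w hs hps => ?_⟩
      rw [hθ w hs hps]
      -- evaluation facts for v₁ := consAll3 x w  (x : Fin m → M)
      have hv1t : ∀ (x : Fin m → M), consAll3 x w jt = w 1 := by
        intro x
        rw [hjt]
        exact consAll3_hi' x w 1 (by omega) (by omega)
      have hv1p : ∀ (x : Fin m → M) (z : M),
          (Fin.cons z (consAll3 x w) : Fin (m+4) → M) ppos = w 0 := by
        intro x z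
        rw [hppos, cons_mk_succ z _ m (by omega) (by omega)]
        have : (⟨m, by omega⟩ : Fin (m+3)) = ⟨m + 0, by omega⟩ := rfl
        rw [this]
        exact consAll3_hi' x w 0 (by omega) (by omega)
      have hv1s : ∀ (x : Fin m → M) (z : M),
          (Fin.cons z (consAll3 x w) : Fin (m+4) → M) spos = w 2 := by
        intro x z
        rw [hspos, cons_mk_succ z _ (m+2) (by omega) (by omega)]
        exact consAll3_hi' x w 2 (by omega) (by omega)
      have hγchar : ∀ (x : Fin m → M) (z : M),
          Realize E (m+4) γ (Fin.cons z (consAll3 x w)) ↔ Comp E i₀ (w 0) z := by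
        intro x z
        rw [hγ]
        have := realize_GF hM i₀ (0 : Fin (m+4)) ppos spos
          (Fin.cons z (consAll3 x w))
          (by rw [hv1s]; exact hs) (by rw [hv1s, hv1p]; exact hps)
        rw [this, hv1p]
        simp
      constructor
      · -- from the absorbed form to the full form
        intro H X hXt hXc
        have h1 := H (Fin.tail X) (fun l => hXt l.succ) (fun l => by
          have := hXc l.succ
          have e : i₀ + 1 + l.val = i₀ + (l.succ).val := by simp; omega
          rw [e]
          exact this)
        rw [hθ₁ (consAll3 (Fin.tail X) w)] at h1
        have h2 := h1 (X 0) (by rw [hv1t]; exact hXt 0) ((hγchar _ _).2 (by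
          have := hXc 0
          simpa using this))
        have e2 : (Fin.cons (X 0) (consAll3 (Fin.tail X) w) : Fin (m+4) → M) =
            consAll3 X w := by
          rw [← consAll3_cons, Fin.cons_self_tail]
        rw [e2] at h2
        exact h2
      · intro H x hxt hxc
        rw [hθ₁ (consAll3 x w)]
        intro z hz hγz
        have hcz : Comp E i₀ (w 0) z := (hγchar _ _).1 hγz
        have h3 := H (Fin.cons z x)
          (fun l => by
            refine Fin.cases ?_ (fun l' => ?_) l
            · simpa using (by rw [hv1t x] at hz; exact hz)
            · simpa using hxt l')
          (fun l => by
            refine Fin.cases ?_ (fun l' => ?_) l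
            · simpa using hcz
            · have := hxc l'
              have e : i₀ + (Fin.succ l').val = i₀ + 1 + l'.val := by simp; omega
              rw [e]
              simpa using this)
        rw [consAll3_cons] at h3
        exact h3

end TraceAux


section Trace

variable {M : Type} {E : M → M → Prop}

/-- the trace (set of coded tuples over `t` inside `s` satisfying `φ`) exists. -/
def TraceStmt (E : M → M → Prop) (m : ℕ) (φ : Fml m) : Prop :=
  ∀ t s : M, IsTrans E t → IsTrans E s → ∃ T : M, ∀ p, E p T ↔
    (E p s ∧ ∃ x : Fin m → M, (∀ i, E (x i) t) ∧ Tup E m p x ∧ Realize E m φ x)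

/-- the set of decodable tuples over `t` inside `s` exists. -/
lemma decSet (hM : KPP E) (m : ℕ) (t s : M) (hs : IsTrans E s) :
    ∃ D, ∀ p, E p D ↔
      (E p s ∧ ∃ x : Fin m → M, (∀ i, E (x i) t) ∧ Tup E m p x) := by
  obtain ⟨D, hD⟩ := kpp_sep0 hM 2 (TupDF m 0 1 2) (TupDF_delta0 m 0 1 2) ![t, s] s
  refine ⟨D, fun p => ?_⟩
  rw [hD p]
  have h2 : ((Fin.cons p ![t, s] : Fin 3 → M) 2) = s := rfl
  have h1 : ((Fin.cons p ![t, s] : Fin 3 → M) 1) = t := rfl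
  constructor
  · rintro ⟨hp, hreal⟩
    have := (realize_TupDF hM m 0 1 2 (Fin.cons p ![t, s])
      (by rw [h2]; exact hs) (by rw [h2]; exact hp)).1 hreal
    rw [h1] at this
    exact ⟨hp, by simpa using this⟩
  · rintro ⟨hp, x, hx, htup⟩
    refine ⟨hp, (realize_TupDF hM m 0 1 2 (Fin.cons p ![t, s])
      (by rw [h2]; exact hs) (by rw [h2]; exact hp)).2 ?_⟩
    rw [h1]
    exact ⟨x, hx, by simpa using htup⟩

lemma traceBase (hM : KPP E) (hne : Nonempty M) {b : Bool} {j : ℕ}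
    (hsep' : SepScheme E (IsLvl IsDelta0P b j)) {m : ℕ} {φ : Fml m}
    (hφ : IsLvl IsDelta0P b j m φ) : TraceStmt E m φ := by
  intro t s ht hs
  set emb3 : Fin m → Fin (m+3) := fun l => ⟨l.val, by omega⟩ with hemb3
  obtain ⟨θ, hθlvl, hθ⟩ := traceAux hM hne m 0 (rename m (m+3) emb3 φ)
    (IsLvl.renameP j b hφ emb3)
  obtain ⟨D, hD⟩ := decSet hM m t s hs
  obtain ⟨T, hT⟩ := hsep' 2 θ hθlvl ![t, s] D
  refine ⟨T, fun p => ?_⟩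
  rw [hT p, hD p]
  set w : Fin 3 → M := Fin.cons p ![t, s] with hw
  have hw0 : w 0 = p := rfl
  have hw1 : w 1 = t := rfl
  have hw2 : w 2 = s := rfl
  constructor
  · rintro ⟨⟨hp, x, hx, htup⟩, hreal⟩
    refine ⟨hp, x, hx, htup, ?_⟩
    have hθc := (hθ w (by rw [hw2]; exact hs) (by rw [hw2, hw0]; exact hp)).1 hreal
    have := hθc x (fun l => by rw [hw1]; exact hx l)
      (fun l => by
        have e : (0 : ℕ) + l.val = l.val := by omega
        rw [e, hw0]
        exact (tup_comp hM m p x htup l (x l)).2 rfl)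
    rw [realize_rename] at this
    have hcm : (consAll3 x w) ∘ emb3 = x := by
      funext l
      exact consAll3_lo x w l.val l.2 (by omega)
    rwa [hcm] at this
  · rintro ⟨hp, x, hx, htup, hreal⟩
    refine ⟨⟨hp, x, hx, htup⟩, ?_⟩
    refine (hθ w (by rw [hw2]; exact hs) (by rw [hw2, hw0]; exact hp)).2 ?_
    intro x' hx' hcomp
    have hxx : x' = x := by
      funext l
      have := hcomp l
      have e : (0 : ℕ) + l.val = l.val := by omega
      rw [e, hw0] at this
      exact (tup_comp hM m p x htup l (x' l)).1 this
    subst hxx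
    rw [realize_rename]
    have hcm : (consAll3 x' w) ∘ emb3 = x' := by
      funext l
      exact consAll3_lo x' w l.val l.2 (by omega)
    rwa [hcm]

lemma traceD0 (hM : KPP E) (hne : Nonempty M) {m : ℕ} {φ : Fml m}
    (h : IsDelta0P m φ) : TraceStmt E m φ :=
  traceBase hM hne (b := true) (j := 0) (kpp_sep0 hM) h

lemma traceNot (hM : KPP E) {m : ℕ} {φ : Fml m} (H : TraceStmt E m φ) :
    TraceStmt E m (Fml.not φ) := by
  intro t s ht hs
  obtain ⟨Tp, hTp⟩ := H t s ht hs
  obtain ⟨D, hD⟩ := decSet hM m t s hs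
  obtain ⟨T, hT⟩ := kpp_sep0 hM 1 (Fml.not (Fml.mem 0 1)) (.not (.mem 0 1)) ![Tp] D
  refine ⟨T, fun p => ?_⟩
  rw [hT p, hD p]
  have hval : ∀ u : M, (Realize E 2 (Fml.not (Fml.mem 0 1)) (Fin.cons u ![Tp]) ↔
      ¬ E u Tp) := fun u => Iff.rfl
  rw [hval p]
  constructor
  · rintro ⟨⟨hp, x, hx, htup⟩, hnt⟩
    refine ⟨hp, x, hx, htup, fun hreal => hnt ?_⟩
    exact (hTp p).2 ⟨hp, x, hx, htup, hreal⟩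
  · rintro ⟨hp, x, hx, htup, hreal⟩
    refine ⟨⟨hp, x, hx, htup⟩, fun hmem => ?_⟩
    obtain ⟨-, x', hx', htup', hreal'⟩ := (hTp p).1 hmem
    rw [tup_unique hM m p x' x htup' htup] at hreal'
    exact hreal hreal'

lemma traceAnd (hM : KPP E) {m : ℕ} {φ ψ : Fml m} (H1 : TraceStmt E m φ)
    (H2 : TraceStmt E m ψ) : TraceStmt E m (Fml.and φ ψ) := by
  intro t s ht hs
  obtain ⟨T1, hT1⟩ := H1 t s ht hs
  obtain ⟨T2, hT2⟩ := H2 t s ht hs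
  obtain ⟨T, hT⟩ := kpp_sep0 hM 1 (Fml.mem 0 1) (.mem 0 1) ![T2] T1
  refine ⟨T, fun p => ?_⟩
  rw [hT p]
  have hval : E p ((Fin.cons p ![T2] : Fin 2 → M) 1) ↔ E p T2 := Iff.rfl
  constructor
  · rintro ⟨h1, h2⟩
    obtain ⟨hp, x, hx, htup, hreal⟩ := (hT1 p).1 h1
    obtain ⟨-, x', hx', htup', hreal'⟩ := (hT2 p).1 h2
    rw [tup_unique hM m p x' x htup' htup] at hreal'
    exact ⟨hp, x, hx, htup, hreal, hreal'⟩
  · rintro ⟨hp, x, hx, htup, hreal1, hreal2⟩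
    exact ⟨(hT1 p).2 ⟨hp, x, hx, htup, hreal1⟩,
      (hT2 p).2 ⟨hp, x, hx, htup, hreal2⟩⟩

lemma traceImp (hM : KPP E) {m : ℕ} {φ ψ : Fml m} (H1 : TraceStmt E m φ)
    (H2 : TraceStmt E m ψ) : TraceStmt E m (Fml.imp φ ψ) :=
  traceNot hM (traceAnd hM (traceNot hM (traceNot hM H1)) (traceNot hM H2))

end Trace


section BallTrace

variable {M : Type} {E : M → M → Prop}

lemma traceBallGen (hM : KPP E) {m : ℕ} (TARGET : Fml m) (φ' : Fml (m+1))
    (Hbody : TraceStmt E (m+1) φ') (t s : M) (ht : IsTrans E t) (hs : IsTrans E s)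
    (t' : M) (ht' : IsTrans E t') (htt' : ∀ z, E z t → E z t')
    (hequiv : ∀ x : Fin m → M, (∀ i, E (x i) t) →
      (Realize E m TARGET x ↔ ∀ z, E z t' → Realize E (m+1) φ' (Fin.cons z x))) :
    ∃ T : M, ∀ p, E p T ↔
      (E p s ∧ ∃ x : Fin m → M, (∀ i, E (x i) t) ∧ Tup E m p x ∧
        Realize E m TARGET x) := by
  obtain ⟨s₂, hs₂, -, hclose⟩ := tupClose hM (m+1) t'
  obtain ⟨T₀, hT₀⟩ := Hbody t' s₂ ht' hs₂
  obtain ⟨D, hD⟩ := decSet hM m t s hs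
  have hφsepd : IsDelta0P 4 (Fml.ballMem 1 (Fml.ballMem 3
      (Fml.imp (OPairF 0 1 2) (Fml.mem 0 5)))) :=
    .ballMem' _ (.ballMem' _ (.imp' (OPairF_delta0 _ _ _) (.mem _ _)))
  obtain ⟨T, hT⟩ := kpp_sep0 hM 3 (Fml.ballMem 1 (Fml.ballMem 3
      (Fml.imp (OPairF 0 1 2) (Fml.mem 0 5)))) hφsepd ![t', s₂, T₀] D
  have hcond : ∀ p : M, Realize E 4 (Fml.ballMem 1 (Fml.ballMem 3
      (Fml.imp (OPairF 0 1 2) (Fml.mem 0 5)))) (Fin.cons p ![t', s₂, T₀]) ↔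
      ∀ z, E z t' → ∀ q, E q s₂ → IsOPair E q z p → E q T₀ := by
    intro p
    simp only [realize_ballMem, realize_imp, realize_mem, realize_OPairF hM]
    exact Iff.rfl
  refine ⟨T, fun p => ?_⟩
  rw [hT p, hD p, hcond p]
  constructor
  · rintro ⟨⟨hp, x, hx, htup⟩, hcnd⟩
    refine ⟨hp, x, hx, htup, (hequiv x hx).2 ?_⟩
    intro z hz
    obtain ⟨q, hq⟩ := mkOPair hM z p
    have htq : Tup E (m+1) q (Fin.cons z x) := by
      refine ⟨p, by simpa using hq, ?_⟩
      rw [tail_cons']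
      exact htup
    have hqs₂ : E q s₂ := hclose (Fin.cons z x) q
      (fun i => by
        refine Fin.cases ?_ (fun i' => ?_) i
        · simpa using hz
        · simpa using htt' _ (hx i')) htq
    have hqT₀ := hcnd z hz q hqs₂ hq
    obtain ⟨-, y, hy, htup', hreal'⟩ := (hT₀ q).1 hqT₀
    rw [tup_unique hM (m+1) q y (Fin.cons z x) htup' htq] at hreal'
    exact hreal'
  · rintro ⟨hp, x, hx, htup, hreal⟩
    refine ⟨⟨hp, x, hx, htup⟩, ?_⟩
    intro z hz q hq hpair
    have htq : Tup E (m+1) q (Fin.cons z x) := by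
      refine ⟨p, by simpa using hpair, ?_⟩
      rw [tail_cons']
      exact htup
    refine (hT₀ q).2 ⟨hq, Fin.cons z x, fun i => ?_, htq,
      (hequiv x hx).1 hreal z hz⟩
    refine Fin.cases ?_ (fun i' => ?_) i
    · simpa using hz
    · simpa using htt' _ (hx i')

lemma traceBP (hM : KPP E) (hne : Nonempty M) {k : ℕ}
    (hsepk : SepScheme E (IsSigmaP k)) :
    ∀ {m : ℕ} {φ : Fml m}, IsBP k m φ → TraceStmt E m φ := by
  intro m φ h
  induction h with
  | ofSigma hσ => exact traceBase hM hne hsepk hσ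
  | ofDelta0 hδ => exact traceD0 hM hne hδ
  | not _ ih => exact traceNot hM ih
  | and _ _ ih1 ih2 => exact traceAnd hM ih1 ih2
  | @allMem m' j φ₀ _ ih =>
      intro t s ht hs
      have Hbody : TraceStmt E (m'+1) (Fml.imp (Fml.mem 0 j.succ) φ₀) :=
        traceImp hM (traceD0 hM hne (.mem 0 j.succ)) ih
      refine traceBallGen hM _ _ Hbody t s ht hs t ht (fun z h => h) ?_
      intro x hx
      simp only [realize_all]
      constructor
      · intro h z _
        exact h z
      · intro h z
        rw [realize_imp]
        intro hmem
        simp only [realize_mem, Fin.cons_zero, Fin.cons_succ] at hmem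
        have hz : E z t := ht (x j) (hx j) z hmem
        have := h z hz
        rw [realize_imp] at this
        exact this (by simpa using hmem)
  | @allSub m' j φ₀ _ ih =>
      intro t s ht hs
      have Hbody : TraceStmt E (m'+1) (Fml.imp (Fml.subeq 0 j.succ) φ₀) :=
        traceImp hM (traceD0 hM hne (.subeq' 0 j.succ)) ih
      obtain ⟨U, hU⟩ := kpp_union hM t
      obtain ⟨P, hP⟩ := kpp_pow hM U
      obtain ⟨d, hd⟩ := kpp_pair hM t P
      obtain ⟨t', ht', hdt'⟩ := transMem hM d
      have htmem : E t t' := ht' d hdt' t ((hd t).2 (Or.inl rfl))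
      have hPmem : E P t' := ht' d hdt' P ((hd P).2 (Or.inr rfl))
      refine traceBallGen hM _ _ Hbody t s ht hs t' ht'
        (fun z hz => ht' t htmem z hz) ?_
      intro x hx
      simp only [realize_all]
      constructor
      · intro h z _
        exact h z
      · intro h z
        rw [realize_imp]
        intro hsub
        simp only [realize_subeq, Fin.cons_zero, Fin.cons_succ] at hsub
        have hzt' : E z t' := by
          refine ht' P hPmem z ((hP z).2 ?_)
          intro w hw
          have : E w (x j) := hsub w hw
          exact (hU w).2 ⟨x j, hx j, this⟩
        have := h z hzt'
        rw [realize_imp] at this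
        refine this ?_
        simp only [realize_subeq, Fin.cons_zero, Fin.cons_succ]
        exact hsub

end BallTrace

end SetTh

open SetTh in
/-- Over KP^P, for each `k ≥ 1`, Σ_k^P-Separation implies B_k^P-Foundation. -/
theorem stmt_10 {M : Type} (E : M → M → Prop) (hM : KPP E) (k : ℕ) (hk : 1 ≤ k)
    (hsep : SepScheme E (IsSigmaP k)) : FndScheme E (IsBP k) := by
  intro n φ hφ v hex
  obtain ⟨a, ha⟩ := hex
  have hne : Nonempty M := ⟨a⟩
  obtain ⟨p₀, hp₀⟩ := tup_exists hM (n+1) (Fin.cons a v) a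
  obtain ⟨t, ht, hp₀t⟩ := transMem hM p₀
  have hcomps : ∀ i, E ((Fin.cons a v : Fin (n+1) → M) i) t :=
    tup_mem hM ht (n+1) p₀ _ hp₀ hp₀t
  have hat : E a t := by simpa using hcomps 0
  have hvt : ∀ i, E (v i) t := fun i => by simpa using hcomps i.succ
  obtain ⟨r, hr⟩ := tup_exists hM n v a
  obtain ⟨s, hs, hts, hclose⟩ := tupClose hM (n+1) t
  obtain ⟨T, hT⟩ := traceBP hM hne hsep hφ t s ht hs
  have hφAd : IsDelta0P 4 (Fml.bexMem 2 (Fml.and (OPairF 0 1 2) (Fml.mem 0 4))) :=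
    .bexMem' _ (.and (OPairF_delta0 _ _ _) (.mem _ _))
  obtain ⟨A, hA⟩ := kpp_sep0 hM 3 (Fml.bexMem 2 (Fml.and (OPairF 0 1 2) (Fml.mem 0 4)))
    hφAd ![r, s, T] t
  have hAreal : ∀ u : M, Realize E 4 (Fml.bexMem 2 (Fml.and (OPairF 0 1 2) (Fml.mem 0 4)))
      (Fin.cons u ![r, s, T]) ↔ ∃ q, E q s ∧ IsOPair E q u r ∧ E q T := by
    intro u
    simp only [realize_bexMem, realize_and, realize_mem, realize_OPairF hM]
    exact Iff.rfl
  have hAchar : ∀ u, E u A ↔ (E u t ∧ Realize E (n+1) φ (Fin.cons u v)) := by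
    intro u
    rw [hA u, hAreal u]
    constructor
    · rintro ⟨hut, q, hqs, hpair, hqT⟩
      refine ⟨hut, ?_⟩
      obtain ⟨-, y, hy, htup', hreal'⟩ := (hT q).1 hqT
      have htq : Tup E (n+1) q (Fin.cons u v) := by
        refine ⟨r, by simpa using hpair, ?_⟩
        rw [tail_cons']
        exact hr
      rw [tup_unique hM (n+1) q y (Fin.cons u v) htup' htq] at hreal'
      exact hreal'
    · rintro ⟨hut, hreal⟩
      refine ⟨hut, ?_⟩
      obtain ⟨q, hq⟩ := mkOPair hM u r
      have htq : Tup E (n+1) q (Fin.cons u v) := by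
        refine ⟨r, by simpa using hq, ?_⟩
        rw [tail_cons']
        exact hr
      have hqcomps : ∀ i, E ((Fin.cons u v : Fin (n+1) → M) i) t := by
        intro i
        refine Fin.cases ?_ (fun i' => ?_) i
        · simpa using hut
        · simpa using hvt i'
      have hqs : E q s := hclose (Fin.cons u v) q hqcomps htq
      exact ⟨q, hqs, hq, (hT q).2 ⟨hqs, Fin.cons u v, hqcomps, htq, hreal⟩⟩
  have haA : E a A := (hAchar a).2 ⟨hat, ha⟩
  obtain ⟨mn, hmn, hminimal⟩ := setFnd hM A ⟨a, haA⟩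
  obtain ⟨hmt, hreal⟩ := (hAchar mn).1 hmn
  refine ⟨mn, hreal, fun u hu hreal' => ?_⟩
  exact hminimal u hu ((hAchar u).2 ⟨ht mn hmt u hu, hreal'⟩)
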